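/- Let G = ⟨x, t | t⁻¹xᵐt = xⁿ⟩ be the Baumslag–Solitar group B(m,n) with m, n nonzero integers. Then the cyclic subgroup ⟨x⟩ is commensurated in G. -/

import Mathlib

def Commensurated {G : Type*} [Group G] (Q : Subgroup G) : Prop :=
  ∀ g : G, (Q.map (MulAut.conj g).toMonoidHom ⊓ Q).relIndex Q ≠ 0 ∧
    (Q.map (MulAut.conj g).toMonoidHom ⊓ Q).relIndex (Q.map (MulAut.conj g).toMonoidHom) ≠ 0

/-- The defining relator of the Baumslag–Solitar group `B(m,n)`:
`t⁻¹ xᵐ t x⁻ⁿ`, where `x = FreeGroup.of false` and `t = FreeGroup.of true`. -/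
def BSRels (m n : ℤ) : Set (FreeGroup Bool) :=
  {(FreeGroup.of true)⁻¹ * (FreeGroup.of false) ^ m * FreeGroup.of true *
    ((FreeGroup.of false) ^ n)⁻¹}

/-- The subgroup generated by `x ^ l` has nonzero relative index in `⟨x⟩` when `l ≠ 0`. -/
lemma relindex_zpowers_zpow_ne_zero {G : Type*} [Group G] (x : G) {l : ℤ} (hl : l ≠ 0) :
    (Subgroup.zpowers (x ^ l)).relIndex (Subgroup.zpowers x) ≠ 0 := by
  set K := Subgroup.zpowers x with hK
  set H := (Subgroup.zpowers (x ^ l)).subgroupOf K with hH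
  haveI : NeZero l.natAbs := ⟨Int.natAbs_ne_zero.mpr hl⟩
  have hfin : Finite (K ⧸ H) := by
    have hs : Function.Surjective (fun z : ZMod l.natAbs =>
        (QuotientGroup.mk (⟨x ^ (z.val : ℤ),
          Subgroup.zpow_mem _ (Subgroup.mem_zpowers x) _⟩ : K) : K ⧸ H)) := by
      intro q
      obtain ⟨⟨y, hy⟩, rfl⟩ := QuotientGroup.mk_surjective q
      obtain ⟨j, rfl⟩ := hy
      refine ⟨(j : ZMod l.natAbs), ?_⟩
      apply (QuotientGroup.eq ).mpr
      rw [Subgroup.mem_subgroupOf]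
      have hcast : ((j - ((((j : ZMod l.natAbs)).val : ℤ)) : ℤ) : ZMod l.natAbs) = 0 := by
        push_cast
        rw [ZMod.natCast_val, ZMod.cast_id]
        ring
      have hdvd : (l.natAbs : ℤ) ∣ j - (((j : ZMod l.natAbs)).val : ℤ) :=
        (ZMod.intCast_zmod_eq_zero_iff_dvd _ _).mp hcast
      obtain ⟨c, hc⟩ := (Int.natAbs_dvd).mp hdvd
      refine ⟨c, ?_⟩
      show (x ^ l) ^ c = _
      rw [← zpow_mul, ← hc]
      simp [zpow_sub]
      group
    exact Finite.of_surjective _ hs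
  exact Subgroup.index_ne_zero_of_finite

theorem cyclic_commensurated_in_BS (m n : ℤ) (hm : m ≠ 0) (hn : n ≠ 0) :
    Commensurated (Subgroup.closure {PresentedGroup.of (rels := BSRels m n) false}) := by
  set X : PresentedGroup (BSRels m n) := PresentedGroup.of false with hX
  set T : PresentedGroup (BSRels m n) := PresentedGroup.of true with hT
  -- the defining relation
  have hrel : T⁻¹ * X ^ m * T = X ^ n := by
    have h1 : PresentedGroup.mk (BSRels m n)
        ((FreeGroup.of true)⁻¹ * (FreeGroup.of false) ^ m * FreeGroup.of true *
          ((FreeGroup.of false) ^ n)⁻¹) = 1 := by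
      apply (QuotientGroup.eq_one_iff _).2
      exact Subgroup.subset_normalClosure rfl
    rw [map_mul, map_mul, map_mul, map_inv, map_inv, map_zpow, map_zpow,
      mul_inv_eq_one] at h1
    exact h1
  -- conjugation of powers
  have conjpow : ∀ (g a : PresentedGroup (BSRels m n)) (c : ℤ),
      g * a ^ c * g⁻¹ = (g * a * g⁻¹) ^ c := by
    intro g a c
    have := map_zpow (MulAut.conj g) a c
    simpa [MulAut.conj_apply] using this.symm
  -- every element commensurates powers of X
  have key : ∀ g : PresentedGroup (BSRels m n),
      ∃ k l : ℤ, k ≠ 0 ∧ l ≠ 0 ∧ g * X ^ k * g⁻¹ = X ^ l := by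
    intro g
    have hmem : g ∈ Subgroup.closure
        (Set.range (PresentedGroup.of : Bool → PresentedGroup (BSRels m n))) := by
      rw [PresentedGroup.closure_range_of]; trivial
    induction hmem using Subgroup.closure_induction with
    | mem y hy =>
      obtain ⟨b, rfl⟩ := hy
      cases b with
      | false =>
        exact ⟨1, 1, one_ne_zero, one_ne_zero, by rw [← hX]; group⟩
      | true =>
        refine ⟨n, m, hn, hm, ?_⟩
        have := hrel
        show T * X ^ n * T⁻¹ = X ^ m
        calc T * X ^ n * T⁻¹ = T * (T⁻¹ * X ^ m * T) * T⁻¹ := by rw [this]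
          _ = X ^ m := by group
    | one => exact ⟨1, 1, one_ne_zero, one_ne_zero, by group⟩
    | mul a b _ _ ha hb =>
      obtain ⟨k, l, hk, hl, hab⟩ := ha
      obtain ⟨k', l', hk', hl', hab'⟩ := hb
      refine ⟨k * k', l * l', mul_ne_zero hk hk', mul_ne_zero hl hl', ?_⟩
      have h1 : b * X ^ (k * k') * b⁻¹ = X ^ (l' * k) := by
        rw [mul_comm k k', zpow_mul, conjpow, hab', ← zpow_mul]
      calc a * b * X ^ (k * k') * (a * b)⁻¹
          = a * (b * X ^ (k * k') * b⁻¹) * a⁻¹ := by group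
        _ = a * X ^ (k * l') * a⁻¹ := by rw [h1, mul_comm l' k]
        _ = X ^ (l * l') := by rw [zpow_mul, conjpow, hab, ← zpow_mul]
    | inv a _ ha =>
      obtain ⟨k, l, hk, hl, hab⟩ := ha
      refine ⟨l, k, hl, hk, ?_⟩
      rw [← hab]; group
  -- conclude
  intro g
  obtain ⟨k, l, hk, hl, hkl⟩ := key g
  set Q := Subgroup.closure {X} with hQ
  have hQz : Q = Subgroup.zpowers X := (Subgroup.zpowers_eq_closure X).symm ▸ rfl
  have hmap : Q.map (MulAut.conj g).toMonoidHom = Subgroup.zpowers (g * X * g⁻¹) := by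
    rw [hQz, ← Subgroup.zpowers_eq_closure] at *
    rw [MonoidHom.map_zpowers]
    simp [MulAut.conj_apply]
  have hXl_mem : X ^ l ∈ Q.map (MulAut.conj g).toMonoidHom ⊓ Q := by
    constructor
    · rw [hmap]
      exact ⟨k, by show (g * X * g⁻¹) ^ k = X ^ l; rw [← conjpow, hkl]⟩
    · rw [hQz]
      exact Subgroup.zpow_mem _ (Subgroup.mem_zpowers X) _
  have hle : Subgroup.zpowers (X ^ l) ≤ Q.map (MulAut.conj g).toMonoidHom ⊓ Q :=
    Subgroup.zpowers_le.mpr hXl_mem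
  constructor
  · intro h0
    have hdvd := Subgroup.relIndex_dvd_of_le_left Q hle
    rw [h0] at hdvd
    have := eq_zero_of_zero_dvd hdvd
    rw [hQz] at this
    exact relindex_zpowers_zpow_ne_zero X hl this
  · intro h0
    have hYk : (g * X * g⁻¹) ^ k = X ^ l := by rw [← conjpow, hkl]
    have hle2 : Subgroup.zpowers ((g * X * g⁻¹) ^ k) ≤
        Q.map (MulAut.conj g).toMonoidHom ⊓ Q := by rw [hYk]; exact hle
    have hdvd := Subgroup.relIndex_dvd_of_le_left
      (Q.map (MulAut.conj g).toMonoidHom) hle2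
    rw [h0] at hdvd
    have h2 := eq_zero_of_zero_dvd hdvd
    rw [hmap] at h2
    exact relindex_zpowers_zpow_ne_zero (g * X * g⁻¹) hk h2
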